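/- Let R_1, ..., R_n be exchangeable real-valued random variables and let Q_{1-α} denote the lower (1-α)-quantile of the empirical distribution (1/n)∑_{j=1}^n δ_{R_j}. If additionally (R_1,...,R_n) is exchangeable with a further variable R_{n+1} jointly (i.e., (R_1,...,R_{n+1}) is exchangeable), then P(R_{n+1} ≤ Q_{1-α} of the empirical distribution of R_1,...,R_{n+1}) ≥ 1 - α. -/

import Mathlib

open MeasureTheory ProbabilityTheory Finset

/-- The `k`-th smallest value (1-indexed, clamped to valid range) of `x`. -/
noncomputable def orderStat {n : ℕ} [NeZero n] (k : ℕ) (x : Fin n → ℝ) : ℝ :=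
  x (Tuple.sort x ⟨min (k - 1) (n - 1), by
    have h := Nat.pos_of_ne_zero (NeZero.ne n); omega⟩)

/-- The lower `β`-quantile of the empirical distribution `(1/n) ∑ δ_{x j}`,
i.e. the `⌈β n⌉`-th smallest of the `x j`. -/
noncomputable def empQuantile {n : ℕ} [NeZero n] (β : ℝ) (x : Fin n → ℝ) : ℝ :=
  orderStat ⌈β * n⌉₊ x

open scoped ENNReal

lemma orderStat_le_iff {n m : ℕ} (x : Fin (n+1) → ℝ) (hm : m ≤ n) (t : ℝ) :
    x (Tuple.sort x ⟨m, by omega⟩) ≤ t ↔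
      m + 1 ≤ (univ.filter fun i => x i ≤ t).card := by
  have h := Tuple.lt_card_le_iff_apply_le_of_monotone (f := x ∘ Tuple.sort x) (a := t)
    (j := ⟨m, by omega⟩) (Tuple.monotone_sort x)
  simp only [Function.comp_apply] at h
  have hcard : (univ.filter fun i => x (Tuple.sort x i) ≤ t).card
      = (univ.filter fun i => x i ≤ t).card := by
    have e := Fintype.card_congr
      ((Tuple.sort x).subtypeEquiv (q := fun i => x i ≤ t) fun i => Iff.rfl)
    simp only [Fintype.card_subtype] at e ⊢
    exact e
  rw [← h, hcard]
  omega

lemma orderStat_le_iff' {n : ℕ} (k : ℕ) (x : Fin (n+1) → ℝ) (t : ℝ) :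
    orderStat k x ≤ t ↔
      min (k-1) n + 1 ≤ (univ.filter fun i => x i ≤ t).card :=
  orderStat_le_iff x (min_le_right _ _) t

lemma filter_card_perm {n : ℕ} (x : Fin (n+1) → ℝ) (π : Equiv.Perm (Fin (n+1))) (t : ℝ) :
    (univ.filter fun i => x (π i) ≤ t).card = (univ.filter fun i => x i ≤ t).card := by
  apply Finset.card_bij' (fun i _ => π i) (fun i _ => π.symm i) <;> simp

lemma orderStat_perm {n : ℕ} (k : ℕ) (x : Fin (n+1) → ℝ) (π : Equiv.Perm (Fin (n+1))) :
    orderStat k (fun i => x (π i)) = orderStat k x := by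
  apply le_antisymm
  · rw [orderStat_le_iff', filter_card_perm]
    exact (orderStat_le_iff' k x _).mp le_rfl
  · rw [orderStat_le_iff']
    rw [← filter_card_perm x π]
    exact (orderStat_le_iff' k _ _).mp le_rfl

lemma measurable_orderStat {n : ℕ} (k : ℕ) :
    Measurable (fun x : Fin (n+1) → ℝ => orderStat k x) := by
  apply measurable_of_Iic
  intro t
  have : (fun x : Fin (n+1) → ℝ => orderStat k x) ⁻¹' Set.Iic t
      = ⋃ s ∈ (univ.powersetCard (min (k-1) n + 1) : Finset (Finset (Fin (n+1)))),
          ⋂ i ∈ s, {x : Fin (n+1) → ℝ | x i ≤ t} := by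
    ext x
    simp only [Set.mem_preimage, Set.mem_Iic, orderStat_le_iff', Set.mem_iUnion,
      Set.mem_iInter, Set.mem_setOf_eq, Finset.mem_powersetCard_univ]
    constructor
    · intro h
      obtain ⟨s, hs, hcard⟩ := Finset.exists_subset_card_eq h
      exact ⟨s, hcard, fun i hi => (Finset.mem_filter.mp (hs hi)).2⟩
    · rintro ⟨s, hcard, hs⟩
      calc min (k-1) n + 1 = s.card := hcard.symm
        _ ≤ _ := Finset.card_le_card fun i hi =>
            Finset.mem_filter.mpr ⟨Finset.mem_univ i, hs i hi⟩
  rw [this]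
  exact MeasurableSet.biUnion (Finset.countable_toSet _) fun s _ =>
    MeasurableSet.biInter (Finset.countable_toSet s) fun i _ =>
      measurableSet_le (measurable_pi_apply i) measurable_const

/-- if `(R 0, …, R n)` (i.e. `R_1,…,R_{n+1}`) is exchangeable, then
`R_{n+1}` is at most the lower `(1-α)`-quantile of the empirical distribution of
all `n+1` values with probability at least `1-α`. -/
theorem exchangeable_empirical_quantile_coverage
    {Ω : Type*} [MeasurableSpace Ω] (P : Measure Ω) [IsProbabilityMeasure P]
    (n : ℕ) (R : Fin (n + 1) → Ω → ℝ) (hmeas : ∀ i, Measurable (R i))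
    (hexch : ∀ π : Equiv.Perm (Fin (n + 1)),
      P.map (fun ω => fun i => R (π i) ω) = P.map (fun ω => fun i => R i ω))
    (α : ℝ) (hα : α ∈ Set.Ioo (0 : ℝ) 1) :
    ENNReal.ofReal (1 - α) ≤
      P {ω | R (Fin.last n) ω ≤ empQuantile (1 - α) (fun i => R i ω)} := by
  obtain ⟨hα0, hα1⟩ := hα
  set X : Ω → (Fin (n+1) → ℝ) := fun ω i => R i ω with hX
  have hXm : Measurable X := measurable_pi_lambda _ hmeas
  set μ : Measure (Fin (n+1) → ℝ) := P.map X with hμ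
  have hμprob : IsProbabilityMeasure μ := Measure.isProbabilityMeasure_map hXm.aemeasurable
  set k : ℕ := ⌈(1 - α) * ((n:ℝ)+1)⌉₊ with hk
  have hkdef : k = ⌈(1 - α) * ((n+1 : ℕ) : ℝ)⌉₊ := by push_cast; rfl
  have hkpos : 1 ≤ k := Nat.one_le_ceil_iff.mpr (by nlinarith [Nat.cast_nonneg (α := ℝ) n])
  have hkle : k ≤ n + 1 := by
    rw [hk]
    apply Nat.ceil_le.mpr
    push_cast
    nlinarith [Nat.cast_nonneg (α := ℝ) n]
  set Q : (Fin (n+1) → ℝ) → ℝ := fun x => empQuantile (1 - α) x with hQ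
  have hQm : Measurable Q := measurable_orderStat _
  set A : Fin (n+1) → Set (Fin (n+1) → ℝ) := fun i => {v | v i ≤ Q v} with hA
  have hAm : ∀ i, MeasurableSet (A i) := fun i =>
    measurableSet_le (measurable_pi_apply i) hQm
  -- symmetry of Q
  have hQsym : ∀ (v : Fin (n+1) → ℝ) (π : Equiv.Perm (Fin (n+1))),
      Q (fun i => v (π i)) = Q v := by
    intro v π
    simp only [hQ, empQuantile]
    rw [show ((n+1 : ℕ) : ℝ) = (n:ℝ)+1 by push_cast; ring]
    exact orderStat_perm _ v π
  -- all A i have the same measure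
  have hswap : ∀ i, μ (A i) = μ (A (Fin.last n)) := by
    intro i
    set π : Equiv.Perm (Fin (n+1)) := Equiv.swap i (Fin.last n) with hπ
    have hπm : Measurable (fun v : Fin (n+1) → ℝ => fun j => v (π j)) :=
      measurable_pi_lambda _ fun j => measurable_pi_apply (π j)
    have hmap : μ.map (fun v => fun j => v (π j)) = μ := by
      rw [hμ, Measure.map_map hπm hXm]
      exact hexch π
    have hpre : (fun v : Fin (n+1) → ℝ => fun j => v (π j)) ⁻¹' (A i) = A (Fin.last n) := by
      ext v
      simp only [Set.mem_preimage, hA, Set.mem_setOf_eq, hQsym v π]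
      rw [show π i = Fin.last n from Equiv.swap_apply_left i (Fin.last n)]
    calc μ (A i) = μ.map (fun v => fun j => v (π j)) (A i) := by rw [hmap]
      _ = μ ((fun v : Fin (n+1) → ℝ => fun j => v (π j)) ⁻¹' (A i)) :=
          Measure.map_apply hπm (hAm i)
      _ = μ (A (Fin.last n)) := by rw [hpre]
  -- pointwise count
  have hcount : ∀ v : Fin (n+1) → ℝ, (k : ℕ) ≤ (univ.filter fun i => v i ≤ Q v).card := by
    intro v
    have := (orderStat_le_iff' ⌈(1-α) * ((n:ℝ)+1)⌉₊ v (Q v)).mp (by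
      have : Q v = orderStat ⌈(1-α) * ((n:ℝ)+1)⌉₊ v := by
        simp only [hQ, empQuantile]; rw [show ((n+1 : ℕ) : ℝ) = (n:ℝ)+1 by push_cast; ring]
      rw [← this])
    omega
  -- sum of measures
  have hsum : (k : ℝ≥0∞) ≤ ∑ i, μ (A i) := by
    have h1 : ∑ i, μ (A i) = ∫⁻ v, ∑ i, (A i).indicator (fun _ => (1:ℝ≥0∞)) v ∂μ := by
      rw [lintegral_finset_sum _ fun i _ => measurable_const.indicator (hAm i)]
      congr 1
      ext i
      rw [lintegral_indicator_const (hAm i), one_mul]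
    rw [h1]
    calc (k : ℝ≥0∞) = ∫⁻ _, (k : ℝ≥0∞) ∂μ := by simp
      _ ≤ _ := by
        apply lintegral_mono
        intro v
        have : ∑ i, (A i).indicator (fun _ => (1:ℝ≥0∞)) v
            = ((univ.filter fun i => v i ≤ Q v).card : ℝ≥0∞) := by
          simp [Set.indicator_apply, hA, Finset.sum_boole]
        show (k:ℝ≥0∞) ≤ ∑ i, (A i).indicator (fun _ => (1:ℝ≥0∞)) v
        rw [this]
        exact_mod_cast Nat.cast_le.mpr (hcount v)
    done
  have hsum' : (k : ℝ≥0∞) ≤ μ (A (Fin.last n)) * (n+1) := by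
    calc (k : ℝ≥0∞) ≤ ∑ i, μ (A i) := hsum
      _ = ∑ _i : Fin (n+1), μ (A (Fin.last n)) := by exact Finset.sum_congr rfl fun i _ => hswap i
      _ = (n+1) • μ (A (Fin.last n)) := by simp
      _ = μ (A (Fin.last n)) * (n+1) := by rw [nsmul_eq_mul, mul_comm]; push_cast; ring_nf
  have hfinal : ENNReal.ofReal (1 - α) ≤ μ (A (Fin.last n)) := by
    have h1 : ENNReal.ofReal (1 - α) * (n+1) ≤ (k : ℝ≥0∞) := by
      have : ENNReal.ofReal (1 - α) * ((n:ℝ≥0∞)+1) = ENNReal.ofReal ((1-α) * ((n:ℝ)+1)) := by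
        rw [ENNReal.ofReal_mul (by linarith)]
        congr 1
        rw [ENNReal.ofReal_add (by positivity) zero_le_one]
        simp [ENNReal.ofReal_natCast]
      rw [this, ← ENNReal.ofReal_natCast k]
      exact ENNReal.ofReal_le_ofReal (Nat.le_ceil _)
    have := h1.trans hsum'
    exact (ENNReal.mul_le_mul_iff_left (by simp) (by simp)).mp this
  have hev : P {ω | R (Fin.last n) ω ≤ empQuantile (1 - α) (fun i => R i ω)}
      = μ (A (Fin.last n)) := by
    rw [hμ, Measure.map_apply hXm (hAm _)]
    rfl
  rw [hev]
  exact hfinal
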